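/- Let n ≥ 1 be an integer, δ ∈ (0,1), μ₁,…,μ_n ∈ ℝ, and c₁,…,c_n ≥ 0 real numbers with c_j > 0 for at least one j. Let P_δ = {w ∈ ℂⁿ : |w_i| < δ for all i} be the polydisk of radius δ. Then ∫_{P_δ} (∏_{i=1}^n |w_i|^{2μ_i}) · (log(∏_{i=1}^n |w_i|^{c_i}))^{−2} dλ_{2n}(w) < +∞ if and only if the following three conditions hold: (a) μ_i ≥ −1 for every i; (b) whenever μ_i = −1 one has c_i > 0; and (c) there is at most one index i with μ_i = −1. -/

import Mathlib

open MeasureTheory Real Set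
set_option maxHeartbeats 1000000

lemma lintegral_fin_prod {n : ℕ} (ν : Measure ℝ) [SigmaFinite ν] (f : Fin n → ℝ → ENNReal)
    (hf : ∀ i, Measurable (f i)) :
    ∫⁻ x : Fin n → ℝ, ∏ i, f i (x i) ∂(Measure.pi fun _ => ν) = ∏ i, ∫⁻ t, f i t ∂ν := by
  induction n with
  | zero => simp [lintegral_const, Measure.pi_empty_univ]
  | succ n ih =>
    have mp := (measurePreserving_piFinSuccAbove (fun _ : Fin (n+1) => ν) 0).symm
    rw [← mp.lintegral_comp_emb (MeasurableEquiv.measurableEmbedding _)]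
    simp_rw [MeasurableEquiv.piFinSuccAbove_symm_apply, Fin.insertNthEquiv,
      Fin.prod_univ_succ, Fin.insertNth_zero]
    simp only [Fin.zero_succAbove, Equiv.coe_fn_mk, Fin.cons_zero, Fin.cons_succ, cast_eq]
    have h1 : AEMeasurable (f 0) ν := (hf 0).aemeasurable
    have h2 : AEMeasurable (fun y : Fin n → ℝ => ∏ j : Fin n, f j.succ (y j))
        (Measure.pi fun _ => ν) :=
      (Finset.measurable_prod Finset.univ (fun j _ =>
        (hf j.succ).comp (measurable_pi_apply j))).aemeasurable
    rw [lintegral_prod_mul h1 h2, ih (fun j => f j.succ) (fun j => hf j.succ)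
      ]

lemma rho_measurable : Measurable fun r : ℝ => ENNReal.ofReal (2 * π * r) :=
  (measurable_const.mul measurable_id).ennreal_ofReal

lemma closedBall_volume_ne_top (b : ℝ) : volume (Metric.closedBall (0:ℂ) b) ≠ ⊤ := by
  rw [Complex.volume_closedBall]
  exact ne_of_lt (ENNReal.mul_lt_top (by simp [ENNReal.pow_lt_top, ENNReal.ofReal_lt_top])
    ENNReal.coe_lt_top)

lemma abs_preimage_Ioc (a b : ℝ) :
    (fun z : ℂ => ‖z‖) ⁻¹' Ioc a b = Metric.closedBall (0:ℂ) b \ Metric.closedBall (0:ℂ) a := by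
  ext z
  simp only [mem_preimage, mem_Ioc, mem_diff, Metric.mem_closedBall, Complex.dist_eq, sub_zero,
    not_le]
  tauto

lemma lint_density_Ioc {a b : ℝ} (ha : 0 ≤ a) (hab : a ≤ b) :
    ∫⁻ r in Ioc a b, ENNReal.ofReal (2 * π * r) = ENNReal.ofReal (π * b^2 - π * a^2) := by
  have hint : IntegrableOn (fun r : ℝ => 2 * π * r) (Ioc a b) volume :=
    (continuous_const.mul continuous_id).integrableOn_Ioc
  rw [← ofReal_integral_eq_lintegral_ofReal hint ?_]
  · congr 1
    rw [← intervalIntegral.integral_of_le hab]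
    rw [intervalIntegral.integral_const_mul, integral_id]
    ring
  · filter_upwards [ae_restrict_mem measurableSet_Ioc] with r hr
    have : (0:ℝ) ≤ r := le_trans ha hr.1.le
    positivity

lemma lint_density_Ioc_nonpos {a b : ℝ} (hb : b ≤ 0) :
    ∫⁻ r in Ioc a b, ENNReal.ofReal (2 * π * r) = 0 := by
  rw [setLIntegral_congr_fun_ae measurableSet_Ioc (ae_of_all _
    (fun r hr => by
      have hr0 : r ≤ 0 := le_trans hr.2 hb
      exact ENNReal.ofReal_of_nonpos (by nlinarith [pi_pos])))]
  simp

lemma map_abs_volume :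
    (volume : Measure ℂ).map (fun z : ℂ => ‖z‖)
      = volume.withDensity (fun r => ENNReal.ofReal (2 * π * r)) := by
  have habs : Measurable (fun z : ℂ => ‖z‖) := continuous_norm.measurable
  refine Measure.ext_of_Ioc' _ _ (fun a b hab => ?_) (fun a b hab => ?_)
  · rw [Measure.map_apply habs measurableSet_Ioc, abs_preimage_Ioc a b]
    exact ne_of_lt (lt_of_le_of_lt (measure_mono diff_subset)
      (lt_of_le_of_ne le_top (closedBall_volume_ne_top b)))
  · rw [Measure.map_apply habs measurableSet_Ioc, withDensity_apply _ measurableSet_Ioc,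
      abs_preimage_Ioc a b]
    rcases le_or_gt b 0 with hb | hb
    · -- b ≤ 0 : both sides are 0
      rw [lint_density_Ioc_nonpos hb]
      have h1 : Metric.closedBall (0:ℂ) b \ Metric.closedBall (0:ℂ) a ⊆
          Metric.closedBall (0:ℂ) 0 := fun z hz =>
        Metric.closedBall_subset_closedBall hb hz.1
      refine le_antisymm (le_trans (measure_mono h1) ?_) (by positivity)
      simp [Complex.volume_closedBall]
    · rcases le_or_gt 0 a with ha | ha
      · -- 0 ≤ a < b
        rw [measure_diff (Metric.closedBall_subset_closedBall hab.le)
          measurableSet_closedBall.nullMeasurableSet (closedBall_volume_ne_top a)]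
        rw [lint_density_Ioc ha hab.le, Complex.volume_closedBall, Complex.volume_closedBall]
        have hb' : 0 ≤ b := le_trans ha hab.le
        rw [← NNReal.coe_real_pi, ← ENNReal.ofReal_coe_nnreal, ← ENNReal.ofReal_pow hb',
          ← ENNReal.ofReal_pow ha, ← ENNReal.ofReal_mul (by positivity),
          ← ENNReal.ofReal_mul (by positivity), ← ENNReal.ofReal_sub _ (by positivity)]
        congr 1; ring
      · -- a < 0 < b
        have h1 : Metric.closedBall (0:ℂ) b \ Metric.closedBall (0:ℂ) a
            = (fun z : ℂ => ‖z‖) ⁻¹' Ioc a b := (abs_preimage_Ioc a b).symm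
        have h2 : (fun z : ℂ => ‖z‖) ⁻¹' Ioc a b = Metric.closedBall (0:ℂ) b := by
          ext z
          simp only [mem_preimage, mem_Ioc, Metric.mem_closedBall, Complex.dist_eq, sub_zero]
          exact ⟨fun h => h.2, fun h => ⟨lt_of_lt_of_le ha (norm_nonneg z), h⟩⟩
        rw [h1, h2, Complex.volume_closedBall]
        have hsplit : Ioc a b = Ioc a 0 ∪ Ioc 0 b := (Ioc_union_Ioc_eq_Ioc ha.le hb.le).symm
        rw [hsplit, lintegral_union measurableSet_Ioc (Ioc_disjoint_Ioc_of_le le_rfl),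
          lint_density_Ioc_nonpos le_rfl, zero_add, lint_density_Ioc le_rfl hb.le]
        rw [← NNReal.coe_real_pi, ← ENNReal.ofReal_coe_nnreal, ← ENNReal.ofReal_pow hb.le,
          ← ENNReal.ofReal_mul (by positivity)]
        congr 1; ring
noncomputable section
namespace LogCrit

/-- density for polar pushforward -/
def rho : ℝ → ENNReal := fun r => ENNReal.ofReal (2 * π * r)

/-- the pushforward of planar measure under abs -/
def nu : Measure ℝ := volume.withDensity rho

instance : SigmaFinite nu := by
  unfold nu rho
  infer_instance

lemma nu_apply {s : Set ℝ} (hs : MeasurableSet s) :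
    nu s = ∫⁻ r in s, ENNReal.ofReal (2 * π * r) := withDensity_apply _ hs

lemma nu_Iic : nu (Iic (0:ℝ)) = 0 := by
  rw [nu_apply measurableSet_Iic]
  rw [setLIntegral_congr_fun_ae measurableSet_Iic (ae_of_all _ (fun r (hr : r ≤ 0) =>
    ENNReal.ofReal_of_nonpos (by nlinarith [pi_pos])))]
  simp

variable {n : ℕ}

/-- product measure -/
def Pim (n : ℕ) : Measure (Fin n → ℝ) := Measure.pi fun _ => nu

lemma measurePreserving_absPi (n : ℕ) :
    MeasurePreserving (fun (w : Fin n → ℂ) i => ‖w i‖)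
      volume (Pim n) := by
  rw [volume_pi]
  exact measurePreserving_pi _ _ (fun _ =>
    ⟨continuous_norm.measurable, map_abs_volume⟩)

lemma reduction {δ : ℝ} (F : (Fin n → ℝ) → ENNReal) (hF : Measurable F) :
    ∫⁻ w : Fin n → ℂ in {w | ∀ i, ‖w i‖ < δ}, F (fun i => ‖w i‖)
      = ∫⁻ r in {r : Fin n → ℝ | ∀ i, r i < δ}, F r ∂(Pim n) := by
  have hW : Measurable (fun (w : Fin n → ℂ) i => ‖w i‖) :=
    (measurePreserving_absPi n).measurable
  have hs : MeasurableSet {r : Fin n → ℝ | ∀ i, r i < δ} := by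
    have : {r : Fin n → ℝ | ∀ i, r i < δ} = ⋂ i, {r | r i < δ} := by
      ext r; simp [Set.mem_iInter]
    rw [this]
    exact MeasurableSet.iInter fun i => measurableSet_lt (measurable_pi_apply i) measurable_const
  rw [← (measurePreserving_absPi n).map_eq, setLIntegral_map hs hF hW]
  rfl

lemma coord_nonpos_null (i : Fin n) : Pim n {r : Fin n → ℝ | r i ≤ 0} = 0 := by
  have h : {r : Fin n → ℝ | r i ≤ 0} = Set.pi Set.univ
      (fun j => if j = i then Iic (0:ℝ) else Set.univ) := by
    ext r
    simp only [Set.mem_setOf_eq, Set.mem_pi, Set.mem_univ, true_implies]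
    constructor
    · intro hr j
      by_cases hj : j = i
      · subst hj; simpa using hr
      · simp [hj]
    · intro hr; have := hr i; simpa using this
  rw [h, Pim, Measure.pi_pi]
  exact Finset.prod_eq_zero (Finset.mem_univ i) (by simp [nu_Iic])

lemma slab_ae_box {δ : ℝ} :
    {r : Fin n → ℝ | ∀ i, r i < δ} =ᵐ[Pim n] Set.pi Set.univ (fun _ : Fin n => Ioo 0 δ) := by
  rw [MeasureTheory.ae_eq_set]
  constructor
  · refine measure_mono_null (fun r hr => ?_) (measure_iUnion_null fun i => coord_nonpos_null i)
    simp only [Set.mem_diff, Set.mem_setOf_eq, Set.mem_pi, Set.mem_univ, true_implies,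
      mem_Ioo, not_forall] at hr
    obtain ⟨h1, j, h2⟩ := hr
    have : r j ≤ 0 := by
      by_contra hpos
      exact h2 ⟨lt_of_not_ge hpos, h1 j⟩
    exact Set.mem_iUnion.2 ⟨j, this⟩
  · have : Set.pi Set.univ (fun _ : Fin n => Ioo 0 δ) \ {r : Fin n → ℝ | ∀ i, r i < δ} = ∅ := by
      ext r
      simp only [Set.mem_diff, Set.mem_pi, Set.mem_univ, true_implies, mem_Ioo,
        Set.mem_setOf_eq, Set.mem_empty_iff_false, iff_false, not_and, not_not]
      intro h i; exact (h i).2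
    simp [this]

end LogCrit
namespace LogCrit

/-! ### One-dimensional facts -/

lemma exp_neg_image (L : ℝ) : (fun u => Real.exp (-u)) '' Ioi L = Ioo 0 (Real.exp (-L)) := by
  ext y
  constructor
  · rintro ⟨u, hu, rfl⟩
    exact ⟨exp_pos _, exp_lt_exp.2 (neg_lt_neg hu)⟩
  · rintro ⟨hy0, hy1⟩
    refine ⟨-Real.log y, ?_, by simp [Real.exp_log hy0]⟩
    have := Real.log_lt_log hy0 hy1
    rw [Real.log_exp] at this
    simpa using lt_neg_of_lt_neg this

lemma hasDeriv_exp_neg (s : Set ℝ) (u : ℝ) :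
    HasDerivWithinAt (fun u => Real.exp (-u)) (-Real.exp (-u)) s u := by
  have h : HasDerivAt (fun u : ℝ => Real.exp (-u)) (Real.exp (-u) * -1) u :=
    (Real.hasDerivAt_exp (-u)).comp u (hasDerivAt_neg u)
  simpa using h.hasDerivWithinAt

lemma injOn_exp_neg (s : Set ℝ) : InjOn (fun u => Real.exp (-u)) s :=
  fun a _ b _ h => by
    have := Real.exp_eq_exp.mp h
    linarith

lemma Ioo_eq_image {δ : ℝ} (hδ0 : 0 < δ) :
    Ioo (0:ℝ) δ = (fun u => Real.exp (-u)) '' Ioi (-Real.log δ) := by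
  rw [exp_neg_image, neg_neg, Real.exp_log hδ0]

lemma integrableOn_inv_sq_Ioi {L : ℝ} (hL : 0 < L) (C : ℝ) :
    IntegrableOn (fun u : ℝ => C * (u ^ 2)⁻¹) (Ioi L) := by
  have h := (integrableOn_Ioi_rpow_of_lt (by norm_num : (-2:ℝ) < -1) hL).const_mul C
  refine IntegrableOn.congr_fun h (fun u hu => ?_) measurableSet_Ioi
  have hu0 : (0:ℝ) < u := lt_trans hL hu
  rw [show ((-2:ℝ) = -((2:ℕ):ℝ)) by norm_num, Real.rpow_neg hu0.le, Real.rpow_natCast]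

/-- the main 1-D bound for the distinguished coordinate -/
lemma oneD_main {δ b mu0 : ℝ} (hδ0 : 0 < δ) (hδ1 : δ < 1) (hb : 0 < b) (hmu : -1 ≤ mu0) :
    IntegrableOn (fun r => r ^ (2*mu0) * ((b * Real.log r)^2)⁻¹ * (2*π*r)) (Ioo 0 δ) := by
  have hL : 0 < -Real.log δ := by
    have := Real.log_neg hδ0 hδ1
    linarith
  rw [Ioo_eq_image hδ0, integrableOn_image_iff_integrableOn_abs_deriv_smul measurableSet_Ioi
    (fun u _ => hasDeriv_exp_neg _ u) (injOn_exp_neg _)]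
  refine Integrable.mono' (integrableOn_inv_sq_Ioi hL (2*π*b⁻¹^2)) ?_ ?_
  · apply Measurable.aestronglyMeasurable
    apply Measurable.mul
    · exact (Real.measurable_exp.comp measurable_neg).neg.abs
    · apply Measurable.mul
      · apply Measurable.mul
        · have hr : Measurable (fun x : ℝ => x ^ (2*mu0)) := by fun_prop
          exact hr.comp (Real.measurable_exp.comp measurable_neg)
        · apply Measurable.inv
          apply Measurable.pow_const
          exact (Real.measurable_log.comp (Real.measurable_exp.comp measurable_neg)).const_mul b
      · exact (Real.measurable_exp.comp measurable_neg).const_mul _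
  · filter_upwards [ae_restrict_mem measurableSet_Ioi] with u hu
    have hu0 : 0 < u := lt_trans hL hu
    have he : (0:ℝ) < Real.exp (-u) := exp_pos _
    rw [abs_neg, abs_of_pos he, smul_eq_mul, Real.log_exp]
    have hnn : 0 ≤ Real.exp (-u) * (Real.exp (-u) ^ (2*mu0) * ((b * -u)^2)⁻¹ * (2*π*Real.exp (-u))) := by
      positivity
    rw [Real.norm_eq_abs, abs_of_nonneg hnn]
    have key : Real.exp (-u) * (Real.exp (-u) ^ (2*mu0) * ((b * -u)^2)⁻¹ * (2*π*Real.exp (-u)))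
        = (Real.exp (-u) ^ (2*mu0+2)) * (2*π) * ((b*u)^2)⁻¹ := by
      rw [show (2*mu0+2 : ℝ) = 2*mu0 + 1 + 1 by ring, Real.rpow_add_one he.ne',
        Real.rpow_add_one he.ne']
      have : (b * -u)^2 = (b*u)^2 := by ring
      rw [this]; ring
    rw [key]
    have h1 : Real.exp (-u) ^ (2*mu0+2) ≤ 1 :=
      Real.rpow_le_one he.le (Real.exp_le_one_iff.2 (by linarith)) (by linarith)
    have h2 : ((b*u)^2)⁻¹ = b⁻¹^2 * (u^2)⁻¹ := by
      rw [mul_pow, mul_inv, inv_pow]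
    rw [h2]
    calc Real.exp (-u) ^ (2*mu0+2) * (2*π) * (b⁻¹^2 * (u^2)⁻¹)
        ≤ 1 * (2*π) * (b⁻¹^2 * (u^2)⁻¹) := by
          have hBn : (0:ℝ) ≤ b⁻¹^2 * (u^2)⁻¹ := by positivity
          exact mul_le_mul_of_nonneg_right
            (mul_le_mul_of_nonneg_right h1 (by positivity)) hBn
      _ = 2*π*b⁻¹^2 * (u^2)⁻¹ := by ring

/-- the easy 1-D bound -/
lemma oneD_easy {δ mu1 : ℝ} (hδ0 : 0 < δ) (hmu : -1 < mu1) :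
    IntegrableOn (fun r => r ^ (2*mu1) * (2*π*r)) (Ioo 0 δ) := by
  have h : IntegrableOn (fun r : ℝ => 2*π * r ^ (2*mu1+1)) (Ioo 0 δ) := by
    have := (intervalIntegral.intervalIntegrable_rpow' (a := 0) (b := δ)
      (by linarith : (-1:ℝ) < 2*mu1+1)).1
    exact (this.mono_set Ioo_subset_Ioc_self).const_mul _
  refine h.congr_fun (fun r hr => ?_) measurableSet_Ioo
  beta_reduce
  rw [Real.rpow_add_one (ne_of_gt hr.1)]
  ring

/-! ### elementary inequalities -/

lemma exp_poly_lower {ε : ℝ} (hε : 0 < ε) (x : ℝ) (hx : 0 ≤ x) :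
    (min 1 (ε/3))^3 * (1+x)^3 ≤ Real.exp (ε*x) := by
  set m := min 1 (ε/3) with hm
  have hm0 : 0 ≤ m := le_min zero_le_one (by linarith)
  have h1 : m * (1+x) ≤ 1 + ε*x/3 := by
    have hma : m ≤ 1 := min_le_left _ _
    have hmb : m ≤ ε/3 := min_le_right _ _
    have : m * x ≤ (ε/3) * x := mul_le_mul_of_nonneg_right hmb hx
    nlinarith
  have h2 : 1 + ε*x/3 ≤ Real.exp (ε*x/3) := by
    have := Real.add_one_le_exp (ε*x/3)
    linarith
  have h3 : (m * (1+x))^3 ≤ (Real.exp (ε*x/3))^3 := by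
    apply pow_le_pow_left₀ (by positivity) (le_trans h1 h2)
  calc m^3 * (1+x)^3 = (m * (1+x))^3 := by ring
    _ ≤ (Real.exp (ε*x/3))^3 := h3
    _ = Real.exp (ε*x) := by
        rw [← Real.exp_nat_mul]
        congr 1
        push_cast
        ring

lemma tsum_harmonic_top {Q : ℝ} (hQ : 0 < Q) :
    ∑' j : ℕ, ENNReal.ofReal (Q / (j+2)) = ⊤ := by
  by_contra h
  have hsum : Summable fun j : ℕ => (Q / ((j:ℝ)+2)).toNNReal :=
    ENNReal.tsum_coe_ne_top_iff_summable.mp h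
  have hsum2 : Summable fun j : ℕ => Q / ((j:ℝ)+2) := by
    have := NNReal.summable_coe.2 hsum
    refine this.congr fun j => ?_
    exact Real.coe_toNNReal _ (by positivity)
  have hsum3 : Summable fun j : ℕ => 1 / ((j:ℝ)+2) := by
    have := hsum2.mul_left Q⁻¹
    refine this.congr fun j => ?_
    field_simp
  have hsum4 : Summable fun n : ℕ => 1 / (n:ℝ) := by
    rw [← summable_nat_add_iff 2]
    refine hsum3.congr fun j => ?_
    push_cast
    ring_nf
  exact Real.not_summable_one_div_natCast hsum4

end LogCrit
namespace LogCrit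
variable {n : ℕ}

/-- the integrand on the real side, without the density -/
def igrand (μ c : Fin n → ℝ) (r : Fin n → ℝ) : ENNReal :=
  (∏ i, ENNReal.ofReal (r i ^ (2 * μ i))) * ENNReal.ofReal (((∑ i, c i * Real.log (r i))^2)⁻¹)

def Tint (n : ℕ) (δ : ℝ) (μ c : Fin n → ℝ) : ENNReal :=
  ∫⁻ r in Set.pi Set.univ (fun _ : Fin n => Ioo 0 δ), igrand μ c r ∂(Pim n)

lemma igrand_measurable (μ c : Fin n → ℝ) : Measurable (igrand μ c) := by
  apply Measurable.mul
  · apply Finset.measurable_prod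
    intro i _
    have hr : Measurable (fun x : ℝ => x ^ (2 * μ i)) := by fun_prop
    exact (hr.comp (measurable_pi_apply i)).ennreal_ofReal
  · apply Measurable.ennreal_ofReal
    apply Measurable.inv
    apply Measurable.pow_const
    apply Finset.measurable_sum
    intro i _
    exact (Real.measurable_log.comp (measurable_pi_apply i)).const_mul _

lemma nu_Ioo_ge {α β : ℝ} (h0 : 0 < α) (hab : α ≤ β) :
    ENNReal.ofReal ((2*π*α) * (β - α)) ≤ nu (Ioo α β) := by
  rw [nu_apply measurableSet_Ioo, ENNReal.ofReal_mul (by positivity)]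
  calc ENNReal.ofReal (2*π*α) * ENNReal.ofReal (β - α)
      = ENNReal.ofReal (2*π*α) * volume (Ioo α β) := by rw [Real.volume_Ioo]
    _ = ∫⁻ _ in Ioo α β, ENNReal.ofReal (2*π*α) := (setLIntegral_const _ _).symm
    _ ≤ ∫⁻ r in Ioo α β, ENNReal.ofReal (2*π*r) :=
        setLIntegral_mono' measurableSet_Ioo fun r hr =>
          ENNReal.ofReal_le_ofReal (by nlinarith [pi_pos, hr.1])

/-- general lower bound for `Tint` by a countable family of disjoint boxes -/
lemma Tint_ge_boxes {δ : ℝ} {μ c : Fin n → ℝ} {ι : Type} [Countable ι]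
    (I : ι → Fin n → Set ℝ) (hms : ∀ k i, MeasurableSet (I k i))
    (hsub : ∀ k i, I k i ⊆ Ioo 0 δ)
    (hdisj : Pairwise (Function.onFun Disjoint fun k => Set.pi Set.univ (I k)))
    (m : ι → ENNReal) (hm : ∀ k, ∀ r ∈ Set.pi Set.univ (I k), m k ≤ igrand μ c r) :
    ∑' k, m k * ∏ i, nu (I k i) ≤ Tint n δ μ c := by
  have hmeas : ∀ k, MeasurableSet (Set.pi Set.univ (I k)) :=
    fun k => MeasurableSet.univ_pi (hms k)
  calc ∑' k, m k * ∏ i, nu (I k i)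
      = ∑' k, m k * (Pim n) (Set.pi Set.univ (I k)) := by
        congr 1; ext k; rw [Pim, Measure.pi_pi]
    _ = ∑' k, ∫⁻ _ in Set.pi Set.univ (I k), m k ∂(Pim n) := by
        congr 1; ext k; rw [setLIntegral_const]
    _ ≤ ∑' k, ∫⁻ r in Set.pi Set.univ (I k), igrand μ c r ∂(Pim n) :=
        ENNReal.tsum_le_tsum fun k => setLIntegral_mono' (hmeas k) (hm k)
    _ = ∫⁻ r in ⋃ k, Set.pi Set.univ (I k), igrand μ c r ∂(Pim n) :=
        (lintegral_iUnion hmeas hdisj _).symm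
    _ ≤ Tint n δ μ c := lintegral_mono_set (Set.iUnion_subset fun k r hr i _ =>
        hsub k i (hr i (Set.mem_univ i)))

/-- bound for rpow on an interval with positive left endpoint -/
lemma rpow_ge_min {x a b p : ℝ} (ha : 0 < a) (hax : a ≤ x) (hxb : x ≤ b) :
    min (a ^ p) (b ^ p) ≤ x ^ p := by
  rcases le_or_gt 0 p with hp | hp
  · exact le_trans (min_le_left _ _) (Real.rpow_le_rpow ha.le hax hp)
  · exact le_trans (min_le_right _ _) (Real.rpow_le_rpow_of_nonpos (lt_of_lt_of_le ha hax) hxb hp.le)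

/-! boxes -/

def An (δ : ℝ) : Set ℝ := Ioo (δ/2) δ
def Jb (δ : ℝ) (k : ℕ) : Set ℝ := Ioo (δ * Real.exp (-(k+1:ℝ))) (δ * Real.exp (-(k:ℝ)))

lemma An_subset {δ : ℝ} (hδ0 : 0 < δ) : An δ ⊆ Ioo 0 δ :=
  fun x hx => ⟨lt_trans (by linarith) hx.1, hx.2⟩

lemma Jb_subset {δ : ℝ} (hδ0 : 0 < δ) (k : ℕ) : Jb δ k ⊆ Ioo 0 δ := by
  intro x hx
  refine ⟨lt_trans (by positivity) hx.1, lt_of_lt_of_le hx.2 ?_⟩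
  nlinarith [Real.exp_le_one_iff.2 (by simp : -(k:ℝ) ≤ 0), Real.exp_pos (-(k:ℝ))]

lemma Jb_disjoint {δ : ℝ} (hδ0 : 0 < δ) : Pairwise (Function.onFun Disjoint (Jb δ)) := by
  have key : ∀ j k : ℕ, j < k → Disjoint (Jb δ j) (Jb δ k) := by
    intro j k hjk
    apply Set.disjoint_left.2
    rintro x ⟨hx1, _⟩ ⟨_, hx4⟩
    have : Real.exp (-(k:ℝ)) ≤ Real.exp (-(j+1:ℝ)) :=
      Real.exp_le_exp.2 (by push_cast; linarith [Nat.succ_le_of_lt hjk,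
        (by exact_mod_cast Nat.succ_le_of_lt hjk : (j:ℝ)+1 ≤ k)])
    have : δ * Real.exp (-(k:ℝ)) ≤ δ * Real.exp (-(j+1:ℝ)) := by nlinarith
    linarith
  intro j k hjk
  rcases lt_or_gt_of_ne hjk with h | h
  · exact key j k h
  · exact (key k j h).symm

lemma nu_An_ge {δ : ℝ} (hδ0 : 0 < δ) :
    ENNReal.ofReal (π * δ^2 / 2) ≤ nu (An δ) := by
  have := nu_Ioo_ge (show (0:ℝ) < δ/2 by linarith) (show δ/2 ≤ δ by linarith)
  refine le_trans (le_of_eq ?_) this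
  congr 1; ring

lemma nu_Jb_ge {δ : ℝ} (hδ0 : 0 < δ) (k : ℕ) :
    ENNReal.ofReal ((2*π*δ^2 * Real.exp (-1) * (1 - Real.exp (-1))) * Real.exp (-(2*k:ℝ)))
      ≤ nu (Jb δ k) := by
  have h1 : (0:ℝ) < δ * Real.exp (-(k+1:ℝ)) := by positivity
  have h2 : δ * Real.exp (-(k+1:ℝ)) ≤ δ * Real.exp (-(k:ℝ)) := by
    have := Real.exp_le_exp.2 (show -(k+1:ℝ) ≤ -(k:ℝ) by linarith)
    nlinarith
  refine le_trans (le_of_eq ?_) (nu_Ioo_ge h1 h2)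
  congr 1
  have e1 : Real.exp (-(k+1:ℝ)) = Real.exp (-(k:ℝ)) * Real.exp (-1) := by
    rw [← Real.exp_add]; congr 1; ring
  have e2 : Real.exp (-(2*k:ℝ)) = Real.exp (-(k:ℝ)) * Real.exp (-(k:ℝ)) := by
    rw [← Real.exp_add]; congr 1; ring
  rw [e1, e2]
  ring

/-- log bounds on boxes; `D` is the master constant -/
def Dc (δ : ℝ) : ℝ := 1 - Real.log δ + Real.log 2

lemma Dc_pos {δ : ℝ} (hδ0 : 0 < δ) (hδ1 : δ < 1) : 0 < Dc δ := by
  have h1 := Real.log_neg hδ0 hδ1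
  have h2 := Real.log_nonneg (by norm_num : (1:ℝ) ≤ 2)
  unfold Dc; linarith

lemma abs_log_An_le {δ : ℝ} (hδ0 : 0 < δ) (hδ1 : δ < 1) {r : ℝ} (hr : r ∈ An δ) :
    |Real.log r| ≤ Dc δ := by
  have hr0 : (0:ℝ) < δ/2 := by linarith
  have hlr : Real.log r < 0 := Real.log_neg (lt_trans hr0 hr.1) (lt_trans hr.2 hδ1)
  rw [abs_of_neg hlr]
  have : Real.log (δ/2) ≤ Real.log r := Real.log_le_log hr0 hr.1.le
  rw [Real.log_div (ne_of_gt hδ0) (by norm_num)] at this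
  unfold Dc; linarith

lemma abs_log_Jb_le {δ : ℝ} (hδ0 : 0 < δ) (hδ1 : δ < 1) {k : ℕ} {r : ℝ} (hr : r ∈ Jb δ k) :
    |Real.log r| ≤ (k+1) * Dc δ := by
  have h1 : (0:ℝ) < δ * Real.exp (-(k+1:ℝ)) := by positivity
  have hr0 : 0 < r := lt_trans h1 hr.1
  have hupper : r < δ := (Jb_subset hδ0 k hr).2
  have hlr : Real.log r < 0 := Real.log_neg hr0 (lt_trans hupper hδ1)
  rw [abs_of_neg hlr]
  have hlow : Real.log (δ * Real.exp (-(k+1:ℝ))) ≤ Real.log r := Real.log_le_log h1 hr.1.le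
  rw [Real.log_mul (ne_of_gt hδ0) (ne_of_gt (Real.exp_pos _)), Real.log_exp] at hlow
  have hlog2 : (0:ℝ) ≤ Real.log 2 := Real.log_nonneg (by norm_num)
  have hld : Real.log δ < 0 := Real.log_neg hδ0 hδ1
  have hk : (0:ℝ) ≤ (k:ℝ) := Nat.cast_nonneg k
  unfold Dc
  nlinarith

end LogCrit
namespace LogCrit
variable {n : ℕ}

lemma lint_lt_top_of_integrableOn {g : ℝ → ℝ} {s : Set ℝ} (h : IntegrableOn g s volume) :
    ∫⁻ t in s, ENNReal.ofReal (g t) < ⊤ := by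
  refine lt_of_le_of_lt (lintegral_mono fun t => ?_) h.hasFiniteIntegral
  rw [← ofReal_norm_eq_enorm]
  exact ENNReal.ofReal_le_ofReal (Real.le_norm_self _)

lemma Tint_lt_top {δ : ℝ} {μ c : Fin n → ℝ} (hδ0 : 0 < δ) (hδ1 : δ < 1)
    (hc : ∀ i, 0 ≤ c i) (hcpos : ∃ j, 0 < c j)
    (h1 : ∀ i, -1 ≤ μ i) (h2 : ∀ i, μ i = -1 → 0 < c i)
    (h3 : ∀ i j, μ i = -1 → μ j = -1 → i = j) :
    Tint n δ μ c < ⊤ := by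
  classical
  -- choice of the distinguished index
  set j₀ : Fin n := if h : ∃ i, μ i = -1 then h.choose else hcpos.choose with hj₀
  have hb : 0 < c j₀ := by
    by_cases h : ∃ i, μ i = -1
    · rw [hj₀]; simp only [dif_pos h]; exact h2 _ h.choose_spec
    · rw [hj₀]; simp only [dif_neg h]; exact hcpos.choose_spec
  have hother : ∀ i, i ≠ j₀ → -1 < μ i := by
    intro i hi
    rcases lt_or_eq_of_le (h1 i) with h | h
    · exact h
    · exfalso
      have hex : ∃ i, μ i = -1 := ⟨i, h.symm⟩
      have : j₀ = hex.choose := by rw [hj₀]; simp only [dif_pos hex]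
      exact hi (h3 i j₀ h.symm (by rw [this]; exact hex.choose_spec))
  -- the dominating product
  set g : Fin n → ℝ → ℝ := fun i t =>
    if i = j₀ then t ^ (2 * μ i) * ((c j₀ * Real.log t)^2)⁻¹ else t ^ (2 * μ i) with hg
  have hgmeas : ∀ i, Measurable (g i) := by
    intro i
    rw [hg]
    by_cases h : i = j₀
    · simp only [if_pos h]
      exact (by fun_prop : Measurable fun t : ℝ => t ^ (2 * μ i)).mul
        ((Real.measurable_log.const_mul _).pow_const 2).inv
    · simp only [if_neg h]
      fun_prop
  have hgnn : ∀ i, ∀ t ∈ Ioo (0:ℝ) δ, 0 ≤ g i t := by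
    intro i t ht
    rw [hg]
    by_cases h : i = j₀
    · simp only [if_pos h]
      exact mul_nonneg (Real.rpow_nonneg ht.1.le _) (by positivity)
    · simp only [if_neg h]
      exact Real.rpow_nonneg ht.1.le _
  set H : Fin n → ℝ → ENNReal := fun i =>
    (Ioo (0:ℝ) δ).indicator (fun t => ENNReal.ofReal (g i t)) with hH
  have hHmeas : ∀ i, Measurable (H i) := fun i =>
    ((hgmeas i).ennreal_ofReal).indicator measurableSet_Ioo
  -- pointwise domination
  have hdom : ∀ r : Fin n → ℝ,
      (Set.pi Set.univ (fun _ : Fin n => Ioo (0:ℝ) δ)).indicator (igrand μ c) r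
        ≤ ∏ i, H i (r i) := by
    intro r
    by_cases hr : r ∈ Set.pi Set.univ (fun _ : Fin n => Ioo (0:ℝ) δ)
    · rw [Set.indicator_of_mem hr]
      have hri : ∀ i, r i ∈ Ioo (0:ℝ) δ := fun i => hr i (Set.mem_univ i)
      have hHr : ∀ i, H i (r i) = ENNReal.ofReal (g i (r i)) := fun i =>
        Set.indicator_of_mem (hri i) _
      have hlog : ∀ i, Real.log (r i) < 0 :=
        fun i => Real.log_neg (hri i).1 (lt_trans (hri i).2 hδ1)
      -- the sum estimate
      have hsum_le : ∑ i, c i * Real.log (r i) ≤ c j₀ * Real.log (r j₀) := by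
        rw [← Finset.add_sum_erase Finset.univ _ (Finset.mem_univ j₀)]
        have : ∑ i ∈ Finset.univ.erase j₀, c i * Real.log (r i) ≤ 0 :=
          Finset.sum_nonpos fun i _ => mul_nonpos_of_nonneg_of_nonpos (hc i) (hlog i).le
        linarith
      have hneg : c j₀ * Real.log (r j₀) < 0 := mul_neg_of_pos_of_neg hb (hlog j₀)
      have hsq : (c j₀ * Real.log (r j₀))^2 ≤ (∑ i, c i * Real.log (r i))^2 := by
        have h1' : -(-(∑ i, c i * Real.log (r i))) ≤ c j₀ * Real.log (r j₀) := by
          rw [neg_neg]; exact hsum_le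
        have h2' : c j₀ * Real.log (r j₀) ≤ -(∑ i, c i * Real.log (r i)) := by
          nlinarith
        calc (c j₀ * Real.log (r j₀))^2 ≤ (-(∑ i, c i * Real.log (r i)))^2 := sq_le_sq' h1' h2'
          _ = (∑ i, c i * Real.log (r i))^2 := neg_sq _
      have hwle : ((∑ i, c i * Real.log (r i))^2)⁻¹ ≤ ((c j₀ * Real.log (r j₀))^2)⁻¹ := by
        have hsqpos : 0 < (c j₀ * Real.log (r j₀))^2 := by nlinarith
        exact inv_anti₀ hsqpos hsq
      -- assemble
      have hprod_eq : ∏ i, g i (r i)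
          = (∏ i, r i ^ (2 * μ i)) * ((c j₀ * Real.log (r j₀))^2)⁻¹ := by
        rw [← Finset.mul_prod_erase Finset.univ (fun i => g i (r i)) (Finset.mem_univ j₀),
          ← Finset.mul_prod_erase Finset.univ (fun i => r i ^ (2 * μ i)) (Finset.mem_univ j₀)]
        have e1 : g j₀ (r j₀) = r j₀ ^ (2 * μ j₀) * ((c j₀ * Real.log (r j₀))^2)⁻¹ := by
          rw [hg]; simp
        have e2 : ∀ i ∈ Finset.univ.erase j₀, g i (r i) = r i ^ (2 * μ i) := by
          intro i hi
          rw [hg]; simp [Finset.ne_of_mem_erase hi]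
        rw [e1, Finset.prod_congr rfl e2]
        ring
      calc igrand μ c r
          = ENNReal.ofReal ((∏ i, r i ^ (2 * μ i)) * ((∑ i, c i * Real.log (r i))^2)⁻¹) := by
            rw [igrand, ENNReal.ofReal_mul (Finset.prod_nonneg fun i _ =>
              Real.rpow_nonneg (hri i).1.le _), ENNReal.ofReal_prod_of_nonneg
              (fun i _ => Real.rpow_nonneg (hri i).1.le _)]
        _ ≤ ENNReal.ofReal (∏ i, g i (r i)) := by
            apply ENNReal.ofReal_le_ofReal
            rw [hprod_eq]
            exact mul_le_mul_of_nonneg_left hwle (Finset.prod_nonneg fun i _ =>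
              Real.rpow_nonneg (hri i).1.le _)
        _ = ∏ i, ENNReal.ofReal (g i (r i)) :=
            ENNReal.ofReal_prod_of_nonneg (fun i _ => hgnn i (r i) (hri i))
        _ = ∏ i, H i (r i) := by
            exact Finset.prod_congr rfl fun i _ => (hHr i).symm
    · rw [Set.indicator_of_notMem hr]
      positivity
  -- bound by the product integral
  have step1 : Tint n δ μ c ≤ ∫⁻ r, ∏ i, H i (r i) ∂(Pim n) := by
    rw [Tint, ← lintegral_indicator (MeasurableSet.univ_pi fun _ => measurableSet_Ioo)]
    exact lintegral_mono hdom
  rw [show (Pim n) = Measure.pi (fun _ : Fin n => nu) from rfl] at step1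
  have step2 := lintegral_fin_prod nu H hHmeas
  -- each factor is finite
  have step3 : ∀ i, ∫⁻ t, H i t ∂nu < ⊤ := by
    intro i
    have hrho : Measurable rho := rho_measurable
    have : ∫⁻ t, H i t ∂nu = ∫⁻ t, (rho * H i) t ∂volume :=
      lintegral_withDensity_eq_lintegral_mul volume hrho (hHmeas i)
    rw [this]
    have heq : ∀ t, (rho * H i) t
        = (Ioo (0:ℝ) δ).indicator (fun t => ENNReal.ofReal (g i t * (2*π*t))) t := by
      intro t
      by_cases ht : t ∈ Ioo (0:ℝ) δ
      · simp only [Pi.mul_apply, hH, Set.indicator_of_mem ht, rho]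
        rw [← ENNReal.ofReal_mul (by nlinarith [pi_pos, ht.1])]
        congr 1; ring
      · simp only [Pi.mul_apply, hH, Set.indicator_of_notMem ht, mul_zero]
    rw [lintegral_congr heq, lintegral_indicator measurableSet_Ioo]
    apply lint_lt_top_of_integrableOn
    rw [hg]
    by_cases h : i = j₀
    · simp only [if_pos h]
      exact oneD_main hδ0 hδ1 hb (h1 i)
    · simp only [if_neg h]
      exact oneD_easy hδ0 (hother i h)
  calc Tint n δ μ c ≤ _ := step1
    _ = ∏ i, ∫⁻ t, H i t ∂nu := step2
    _ < ⊤ := ENNReal.prod_lt_top fun i _ => step3 i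

end LogCrit
namespace LogCrit
variable {n : ℕ}

/-- generic pointwise lower bound for the integrand on a box -/
lemma igrand_lower {δ : ℝ} (hδ1 : δ < 1) {μ c : Fin n → ℝ}
    (hc : ∀ i, 0 ≤ c i) (hcpos : ∃ j, 0 < c j)
    (I : Fin n → Set ℝ) (hsub : ∀ i, I i ⊆ Ioo 0 δ)
    (L M : Fin n → ℝ) (hL0 : ∀ i, 0 ≤ L i)
    (hL : ∀ i, ∀ t ∈ I i, L i ≤ t ^ (2 * μ i))
    (hM : ∀ i, ∀ t ∈ I i, |Real.log t| ≤ M i)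
    {r : Fin n → ℝ} (hr : r ∈ Set.pi Set.univ I) :
    ENNReal.ofReal (∏ i, L i) * ENNReal.ofReal (((∑ i, c i * M i)^2)⁻¹) ≤ igrand μ c r := by
  have hri : ∀ i, r i ∈ I i := fun i => hr i (Set.mem_univ i)
  have hrpos : ∀ i, 0 < r i := fun i => (hsub i (hri i)).1
  have hlog : ∀ i, Real.log (r i) < 0 :=
    fun i => Real.log_neg (hrpos i) (lt_trans (hsub i (hri i)).2 hδ1)
  rw [igrand]
  apply mul_le_mul'
  · rw [ENNReal.ofReal_prod_of_nonneg (fun i _ => hL0 i)]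
    exact Finset.prod_le_prod' fun i _ => ENNReal.ofReal_le_ofReal (hL i _ (hri i))
  · apply ENNReal.ofReal_le_ofReal
    -- the sum is strictly negative
    obtain ⟨j, hj⟩ := hcpos
    have hsneg : ∑ i, c i * Real.log (r i) < 0 := by
      rw [← Finset.add_sum_erase Finset.univ _ (Finset.mem_univ j)]
      have h1' : c j * Real.log (r j) < 0 := mul_neg_of_pos_of_neg hj (hlog j)
      have h2' : ∑ i ∈ Finset.univ.erase j, c i * Real.log (r i) ≤ 0 :=
        Finset.sum_nonpos fun i _ => mul_nonpos_of_nonneg_of_nonpos (hc i) (hlog i).le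
      linarith
    have habs : |∑ i, c i * Real.log (r i)| ≤ ∑ i, c i * M i := by
      refine le_trans (Finset.abs_sum_le_sum_abs _ _) (Finset.sum_le_sum fun i _ => ?_)
      rw [abs_mul, abs_of_nonneg (hc i)]
      exact mul_le_mul_of_nonneg_left (hM i _ (hri i)) (hc i)
    have hsq : (∑ i, c i * Real.log (r i))^2 ≤ (∑ i, c i * M i)^2 := by
      rw [← sq_abs (∑ i, c i * Real.log (r i))]
      have h0 : (0:ℝ) ≤ |∑ i, c i * Real.log (r i)| := abs_nonneg _
      nlinarith
    exact inv_anti₀ (by nlinarith) hsq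

end LogCrit
namespace LogCrit
variable {n : ℕ}

lemma disjoint_pi_of_coord {I I' : Fin n → Set ℝ} (i₀ : Fin n) (h : Disjoint (I i₀) (I' i₀)) :
    Disjoint (Set.pi Set.univ I) (Set.pi Set.univ I') := by
  rw [Set.disjoint_left]
  intro r h1 h2
  exact Set.disjoint_left.1 h (h1 i₀ (Set.mem_univ i₀)) (h2 i₀ (Set.mem_univ i₀))

def KA (δ : ℝ) : ℝ := π * δ^2/2
def K1 (δ : ℝ) : ℝ := 2*π*δ^2 * Real.exp (-1) * (1 - Real.exp (-1))

lemma KA_pos {δ : ℝ} (hδ0 : 0 < δ) : 0 < KA δ := by unfold KA; positivity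

lemma exp_neg_one_lt_one : Real.exp (-1) < 1 := by
  rw [show (1:ℝ) = Real.exp 0 by rw [Real.exp_zero]]
  exact Real.exp_lt_exp.2 (by norm_num)

lemma K1_pos {δ : ℝ} (hδ0 : 0 < δ) : 0 < K1 δ := by
  unfold K1
  have h1 : (0:ℝ) < 1 - Real.exp (-1) := by linarith [exp_neg_one_lt_one]
  have h2 := Real.exp_pos (-1:ℝ)
  have h3 := pi_pos
  exact mul_pos (by positivity) h1

lemma sum_c_pos {c : Fin n → ℝ} (hc : ∀ i, 0 ≤ c i) (hcpos : ∃ j, 0 < c j) :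
    0 < ∑ i, c i := by
  obtain ⟨j, hj⟩ := hcpos
  exact Finset.sum_pos' (fun i _ => hc i) ⟨j, Finset.mem_univ j, hj⟩

lemma mA_pos {δ : ℝ} (hδ0 : 0 < δ) (p : ℝ) : 0 < min ((δ/2) ^ p) (δ ^ p) :=
  lt_min (Real.rpow_pos_of_pos (by linarith) p) (Real.rpow_pos_of_pos hδ0 p)

lemma mA_le {δ : ℝ} (p : ℝ) (hδ0 : 0 < δ) {t : ℝ} (ht : t ∈ An δ) :
    min ((δ/2) ^ p) (δ ^ p) ≤ t ^ p :=
  rpow_ge_min (by linarith) ht.1.le ht.2.le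

lemma Jb_rpow_le {δ : ℝ} (hδ0 : 0 < δ) {p : ℝ} (hp : p ≤ 0) {k : ℕ} {t : ℝ}
    (ht : t ∈ Jb δ k) : (δ * Real.exp (-(k:ℝ))) ^ p ≤ t ^ p := by
  have h0 : 0 < t := lt_trans (by positivity) ht.1
  exact Real.rpow_le_rpow_of_nonpos h0 ht.2.le hp

/-- First divergence case: some exponent below -1 -/
lemma Tint_top_A {δ : ℝ} {μ c : Fin n → ℝ} (hδ0 : 0 < δ) (hδ1 : δ < 1)
    (hc : ∀ i, 0 ≤ c i) (hcpos : ∃ j, 0 < c j) {i₀ : Fin n} (hμ : μ i₀ < -1) :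
    Tint n δ μ c = ⊤ := by
  classical
  set D := Dc δ with hD
  have hDpos : 0 < D := Dc_pos hδ0 hδ1
  set CC := (∑ i, c i) * D with hCC
  have hCCpos : 0 < CC := mul_pos (sum_c_pos hc hcpos) hDpos
  set mA : Fin n → ℝ := fun i => min ((δ/2) ^ (2 * μ i)) (δ ^ (2 * μ i)) with hmA
  set I : ℕ → Fin n → Set ℝ := fun k i => if i = i₀ then Jb δ k else An δ with hI
  set L : ℕ → Fin n → ℝ :=
    fun k i => if i = i₀ then (δ * Real.exp (-(k:ℝ))) ^ (2 * μ i₀) else mA i with hL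
  set M : ℕ → Fin n → ℝ := fun k i => if i = i₀ then (k+1) * D else D with hM
  set m : ℕ → ENNReal :=
    fun k => ENNReal.ofReal (∏ i, L k i) * ENNReal.ofReal (((∑ i, c i * M k i)^2)⁻¹) with hm
  -- the sum of box masses is at most Tint
  have hbox : ∑' k, m k * ∏ i, nu (I k i) ≤ Tint n δ μ c := by
    apply Tint_ge_boxes
    · intro k i
      by_cases h : i = i₀
      · simp only [hI, if_pos h]; exact measurableSet_Ioo
      · simp only [hI, if_neg h]; exact measurableSet_Ioo
    · intro k i
      by_cases h : i = i₀
      · simp only [hI, if_pos h]; exact Jb_subset hδ0 k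
      · simp only [hI, if_neg h]; exact An_subset hδ0
    · intro k k' hkk'
      apply disjoint_pi_of_coord i₀
      simp only [hI, if_pos rfl]
      exact Jb_disjoint hδ0 hkk'
    · intro k r hr
      apply igrand_lower hδ1 hc hcpos (I k)
      · intro i
        by_cases h : i = i₀
        · simp only [hI, if_pos h]; exact Jb_subset hδ0 k
        · simp only [hI, if_neg h]; exact An_subset hδ0
      · intro i
        by_cases h : i = i₀
        · simp only [hL, if_pos h]
          exact (Real.rpow_pos_of_pos (by positivity) _).le
        · simp only [hL, if_neg h, hmA]
          exact (mA_pos hδ0 _).le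
      · intro i t ht
        by_cases h : i = i₀
        · simp only [hL, if_pos h]
          simp only [hI, if_pos h] at ht
          rw [h]
          exact Jb_rpow_le hδ0 (by linarith) ht
        · simp only [hL, if_neg h, hmA]
          simp only [hI, if_neg h] at ht
          exact mA_le _ hδ0 ht
      · intro i t ht
        by_cases h : i = i₀
        · simp only [hM, if_pos h]
          simp only [hI, if_pos h] at ht
          rw [hD]
          exact abs_log_Jb_le hδ0 hδ1 ht
        · simp only [hM, if_neg h]
          simp only [hI, if_neg h] at ht
          rw [hD]
          have hk1 : (1:ℝ) ≤ (k:ℝ)+1 := by linarith [Nat.cast_nonneg (α := ℝ) k]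
          have h2 := abs_log_An_le hδ0 hδ1 ht
          nlinarith [hDpos]
      · exact hr
  -- lower bound for each term
  set ε : ℝ := -(2 * μ i₀) - 2 with hε
  have hεpos : 0 < ε := by rw [hε]; linarith
  set mc : ℝ := min 1 (ε/3) with hmc
  have hmcpos : 0 < mc := lt_min one_pos (by linarith)
  set mAe : ℝ := ∏ i ∈ Finset.univ.erase i₀, mA i with hmAe
  have hmAepos : 0 < mAe := Finset.prod_pos fun i _ => mA_pos hδ0 _
  set QQ : ℝ := δ ^ (2 * μ i₀) * mAe * (CC^2)⁻¹ * (K1 δ * KA δ^(n-1)) * mc^3 with hQQ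
  have hQQpos : 0 < QQ := by
    have := Real.rpow_pos_of_pos hδ0 (2 * μ i₀)
    have := K1_pos hδ0
    have := KA_pos hδ0
    positivity
  have hterm : ∀ k : ℕ, ENNReal.ofReal QQ ≤ m k * ∏ i, nu (I k i) := by
    intro k
    -- the measure part
    have hnu : ENNReal.ofReal (K1 δ * Real.exp (-(2*k:ℝ)) * KA δ^(n-1)) ≤ ∏ i, nu (I k i) := by
      have e1 : ∏ i, nu (I k i) = nu (Jb δ k) * ∏ i ∈ Finset.univ.erase i₀, nu (An δ) := by
        rw [← Finset.mul_prod_erase Finset.univ _ (Finset.mem_univ i₀)]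
        congr 1
        · simp [hI]
        · exact Finset.prod_congr rfl fun i hi => by
            simp [hI, Finset.ne_of_mem_erase hi]
      rw [e1, Finset.prod_const, Finset.card_erase_of_mem (Finset.mem_univ i₀),
        Finset.card_univ, Fintype.card_fin]
      have h2 : ENNReal.ofReal (K1 δ * Real.exp (-(2*k:ℝ)) * KA δ^(n-1))
          = ENNReal.ofReal (K1 δ * Real.exp (-(2*k:ℝ))) * ENNReal.ofReal (KA δ)^(n-1) := by
        rw [← ENNReal.ofReal_pow (KA_pos hδ0).le, ← ENNReal.ofReal_mul
          (mul_pos (K1_pos hδ0) (Real.exp_pos _)).le]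
      rw [h2]
      exact mul_le_mul' (nu_Jb_ge hδ0 k) (pow_le_pow_left' (nu_An_ge hδ0) _)
    -- the density part
    have hprodL : ∏ i, L k i = (δ * Real.exp (-(k:ℝ))) ^ (2 * μ i₀) * mAe := by
      rw [← Finset.mul_prod_erase Finset.univ _ (Finset.mem_univ i₀)]
      congr 1
      · simp [hL]
      · exact Finset.prod_congr rfl fun i hi => by
          simp [hL, Finset.ne_of_mem_erase hi]
    have hsumM : ∑ i, c i * M k i ≤ (k+1) * CC := by
      rw [hCC]
      calc ∑ i, c i * M k i ≤ ∑ i, c i * ((k+1) * D) := by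
            apply Finset.sum_le_sum
            intro i _
            apply mul_le_mul_of_nonneg_left _ (hc i)
            by_cases h : i = i₀
            · simp [hM, h]
            · simp only [hM, if_neg h]
              nlinarith [Nat.cast_nonneg (α := ℝ) k]
        _ = (k+1) * ((∑ i, c i) * D) := by rw [← Finset.sum_mul]; ring
    have hMnonneg : ∀ i, 0 ≤ M k i := by
      intro i
      by_cases h : i = i₀
      · simp only [hM, if_pos h]; positivity
      · simp only [hM, if_neg h]; exact hDpos.le
    have hMpos : ∀ i, 0 < M k i := by
      intro i
      by_cases h : i = i₀
      · simp only [hM, if_pos h]; positivity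
      · simp only [hM, if_neg h]; exact hDpos
    have hsumMpos : 0 < ∑ i, c i * M k i := by
      obtain ⟨j, hj⟩ := hcpos
      exact Finset.sum_pos' (fun i _ => mul_nonneg (hc i) (hMnonneg i))
        ⟨j, Finset.mem_univ j, mul_pos hj (hMpos j)⟩
    have hW : (((k+1) * CC)^2)⁻¹ ≤ ((∑ i, c i * M k i)^2)⁻¹ := by
      apply inv_anti₀ (by positivity)
      nlinarith
    -- combine in ℝ
    have hreal : QQ ≤ (∏ i, L k i) * ((((k+1) * CC)^2)⁻¹)
        * (K1 δ * Real.exp (-(2*k:ℝ)) * KA δ^(n-1)) := by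
      rw [hprodL, Real.mul_rpow hδ0.le (Real.exp_pos _).le, ← Real.exp_mul]
      have hexp : Real.exp (-(k:ℝ) * (2 * μ i₀)) * Real.exp (-(2*k:ℝ))
          = Real.exp (ε * k) := by
        rw [← Real.exp_add]; congr 1; rw [hε]; ring
      have hpoly : mc^3 * (1+(k:ℝ))^3 ≤ Real.exp (ε * k) :=
        exp_poly_lower hεpos k (Nat.cast_nonneg k)
      have hk1 : (1:ℝ) ≤ 1 + (k:ℝ) := by linarith [Nat.cast_nonneg (α := ℝ) k]
      have hA : (0:ℝ) < δ ^ (2 * μ i₀) := Real.rpow_pos_of_pos hδ0 _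
      have hK : (0:ℝ) < K1 δ * KA δ^(n-1) :=
        mul_pos (K1_pos hδ0) (pow_pos (KA_pos hδ0) _)
      -- rearrange: LHS = A*mAe*(CC²)⁻¹*K*mc³ ; RHS = A*exp(εk)*mAe*((k+1)CC)⁻²*K
      rw [hQQ]
      have key : δ ^ (2 * μ i₀) * Real.exp (-(k:ℝ) * (2 * μ i₀)) * mAe
            * ((((k:ℝ)+1) * CC)^2)⁻¹ * (K1 δ * Real.exp (-(2*k:ℝ)) * KA δ^(n-1))
          = (δ ^ (2 * μ i₀) * mAe * (CC^2)⁻¹ * (K1 δ * KA δ^(n-1)))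
            * (Real.exp (ε * k) * (((k:ℝ)+1)^2)⁻¹) := by
        rw [← hexp]
        field_simp
      rw [key]
      have h2 : mc^3 ≤ Real.exp (ε * k) * (((k:ℝ)+1)^2)⁻¹ := by
        have hkpos : (0:ℝ) < ((k:ℝ)+1)^2 := by positivity
        have hknn : (0:ℝ) ≤ (k:ℝ) := Nat.cast_nonneg k
        have h3 : mc^3 * (((k:ℝ)+1)^2) ≤ Real.exp (ε * k) := by
          nlinarith [hpoly, mul_nonneg (mul_nonneg (pow_nonneg hmcpos.le 3)
            (sq_nonneg ((k:ℝ)+1))) hknn]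
        rw [← div_eq_mul_inv, le_div_iff₀ hkpos]
        exact h3
      have hbase : (0:ℝ) ≤ δ ^ (2 * μ i₀) * mAe * (CC^2)⁻¹ * (K1 δ * KA δ^(n-1)) := by
        positivity
      calc δ ^ (2 * μ i₀) * mAe * (CC^2)⁻¹ * (K1 δ * KA δ^(n-1)) * mc^3
          ≤ δ ^ (2 * μ i₀) * mAe * (CC^2)⁻¹ * (K1 δ * KA δ^(n-1))
            * (Real.exp (ε * k) * (((k:ℝ)+1)^2)⁻¹) := by
            exact mul_le_mul_of_nonneg_left h2 hbase
        _ = _ := by ring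
    -- now to ENNReal
    calc ENNReal.ofReal QQ
        ≤ ENNReal.ofReal ((∏ i, L k i) * ((((k+1) * CC)^2)⁻¹)
            * (K1 δ * Real.exp (-(2*k:ℝ)) * KA δ^(n-1))) := ENNReal.ofReal_le_ofReal hreal
      _ = ENNReal.ofReal (∏ i, L k i) * ENNReal.ofReal ((((k+1) * CC)^2)⁻¹)
            * ENNReal.ofReal (K1 δ * Real.exp (-(2*k:ℝ)) * KA δ^(n-1)) := by
          rw [ENNReal.ofReal_mul ?h1, ENNReal.ofReal_mul ?h2]
          case h1 => rw [hprodL]; positivity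
          case h2 => rw [hprodL]
                     have := Real.rpow_pos_of_pos (show (0:ℝ) < δ * Real.exp (-(k:ℝ)) by
                        positivity) (2 * μ i₀)
                     positivity
      _ ≤ m k * ∏ i, nu (I k i) := by
          rw [hm]
          have := ENNReal.ofReal_le_ofReal hW
          exact mul_le_mul' (mul_le_mul' le_rfl this) hnu
  -- sum diverges
  have : (⊤:ENNReal) ≤ Tint n δ μ c := by
    refine le_trans ?_ hbox
    rw [show (⊤:ENNReal) = ∑' _ : ℕ, ENNReal.ofReal QQ from
      (ENNReal.tsum_const_eq_top_of_ne_zero (by simp [ENNReal.ofReal_eq_zero]; linarith)).symm]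
    exact ENNReal.tsum_le_tsum hterm
  exact top_le_iff.1 this

end LogCrit
namespace LogCrit
variable {n : ℕ}

/-- Second divergence case: exponent -1 with vanishing c -/
lemma Tint_top_B {δ : ℝ} {μ c : Fin n → ℝ} (hδ0 : 0 < δ) (hδ1 : δ < 1)
    (hc : ∀ i, 0 ≤ c i) (hcpos : ∃ j, 0 < c j) {i₀ : Fin n} (hμ : μ i₀ = -1)
    (hc0 : c i₀ = 0) :
    Tint n δ μ c = ⊤ := by
  classical
  set D := Dc δ with hD
  have hDpos : 0 < D := Dc_pos hδ0 hδ1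
  set CC := (∑ i, c i) * D with hCC
  have hCCpos : 0 < CC := mul_pos (sum_c_pos hc hcpos) hDpos
  set mA : Fin n → ℝ := fun i => min ((δ/2) ^ (2 * μ i)) (δ ^ (2 * μ i)) with hmA
  set I : ℕ → Fin n → Set ℝ := fun k i => if i = i₀ then Jb δ k else An δ with hI
  set L : ℕ → Fin n → ℝ :=
    fun k i => if i = i₀ then (δ * Real.exp (-(k:ℝ))) ^ (2 * μ i₀) else mA i with hL
  set M : ℕ → Fin n → ℝ := fun k i => if i = i₀ then (k+1) * D else D with hM
  set m : ℕ → ENNReal :=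
    fun k => ENNReal.ofReal (∏ i, L k i) * ENNReal.ofReal (((∑ i, c i * M k i)^2)⁻¹) with hm
  have hbox : ∑' k, m k * ∏ i, nu (I k i) ≤ Tint n δ μ c := by
    apply Tint_ge_boxes
    · intro k i
      by_cases h : i = i₀
      · simp only [hI, if_pos h]; exact measurableSet_Ioo
      · simp only [hI, if_neg h]; exact measurableSet_Ioo
    · intro k i
      by_cases h : i = i₀
      · simp only [hI, if_pos h]; exact Jb_subset hδ0 k
      · simp only [hI, if_neg h]; exact An_subset hδ0
    · intro k k' hkk'
      apply disjoint_pi_of_coord i₀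
      simp only [hI, if_pos rfl]
      exact Jb_disjoint hδ0 hkk'
    · intro k r hr
      apply igrand_lower hδ1 hc hcpos (I k)
      · intro i
        by_cases h : i = i₀
        · simp only [hI, if_pos h]; exact Jb_subset hδ0 k
        · simp only [hI, if_neg h]; exact An_subset hδ0
      · intro i
        by_cases h : i = i₀
        · simp only [hL, if_pos h]
          exact (Real.rpow_pos_of_pos (by positivity) _).le
        · simp only [hL, if_neg h, hmA]
          exact (mA_pos hδ0 _).le
      · intro i t ht
        by_cases h : i = i₀
        · simp only [hL, if_pos h]
          simp only [hI, if_pos h] at ht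
          rw [h]
          exact Jb_rpow_le hδ0 (by rw [hμ]; norm_num) ht
        · simp only [hL, if_neg h, hmA]
          simp only [hI, if_neg h] at ht
          exact mA_le _ hδ0 ht
      · intro i t ht
        by_cases h : i = i₀
        · simp only [hM, if_pos h]
          simp only [hI, if_pos h] at ht
          rw [hD]
          exact abs_log_Jb_le hδ0 hδ1 ht
        · simp only [hM, if_neg h]
          simp only [hI, if_neg h] at ht
          rw [hD]
          exact abs_log_An_le hδ0 hδ1 ht
      · exact hr
  set mAe : ℝ := ∏ i ∈ Finset.univ.erase i₀, mA i with hmAe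
  have hmAepos : 0 < mAe := Finset.prod_pos fun i _ => mA_pos hδ0 _
  set QQ : ℝ := δ ^ (2 * μ i₀) * mAe * (CC^2)⁻¹ * (K1 δ * KA δ^(n-1)) with hQQ
  have hQQpos : 0 < QQ := by
    have := Real.rpow_pos_of_pos hδ0 (2 * μ i₀)
    have := K1_pos hδ0
    have := KA_pos hδ0
    positivity
  have hterm : ∀ k : ℕ, ENNReal.ofReal QQ ≤ m k * ∏ i, nu (I k i) := by
    intro k
    have hnu : ENNReal.ofReal (K1 δ * Real.exp (-(2*k:ℝ)) * KA δ^(n-1)) ≤ ∏ i, nu (I k i) := by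
      have e1 : ∏ i, nu (I k i) = nu (Jb δ k) * ∏ i ∈ Finset.univ.erase i₀, nu (An δ) := by
        rw [← Finset.mul_prod_erase Finset.univ _ (Finset.mem_univ i₀)]
        congr 1
        · simp [hI]
        · exact Finset.prod_congr rfl fun i hi => by
            simp [hI, Finset.ne_of_mem_erase hi]
      rw [e1, Finset.prod_const, Finset.card_erase_of_mem (Finset.mem_univ i₀),
        Finset.card_univ, Fintype.card_fin]
      have h2 : ENNReal.ofReal (K1 δ * Real.exp (-(2*k:ℝ)) * KA δ^(n-1))
          = ENNReal.ofReal (K1 δ * Real.exp (-(2*k:ℝ))) * ENNReal.ofReal (KA δ)^(n-1) := by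
        rw [← ENNReal.ofReal_pow (KA_pos hδ0).le, ← ENNReal.ofReal_mul
          (mul_pos (K1_pos hδ0) (Real.exp_pos _)).le]
      rw [h2]
      exact mul_le_mul' (nu_Jb_ge hδ0 k) (pow_le_pow_left' (nu_An_ge hδ0) _)
    have hprodL : ∏ i, L k i = (δ * Real.exp (-(k:ℝ))) ^ (2 * μ i₀) * mAe := by
      rw [← Finset.mul_prod_erase Finset.univ _ (Finset.mem_univ i₀)]
      congr 1
      · simp [hL]
      · exact Finset.prod_congr rfl fun i hi => by
          simp [hL, Finset.ne_of_mem_erase hi]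
    have hsumM : ∑ i, c i * M k i ≤ CC := by
      rw [hCC]
      rw [← Finset.add_sum_erase Finset.univ _ (Finset.mem_univ i₀), hc0, zero_mul, zero_add]
      calc ∑ i ∈ Finset.univ.erase i₀, c i * M k i
          = ∑ i ∈ Finset.univ.erase i₀, c i * D := by
            refine Finset.sum_congr rfl (fun i hi => ?_)
            simp [hM, Finset.ne_of_mem_erase hi]
        _ ≤ ∑ i ∈ Finset.univ, c i * D :=
            Finset.sum_le_sum_of_subset_of_nonneg (Finset.erase_subset _ _)
              (fun i _ _ => mul_nonneg (hc i) hDpos.le)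
        _ = (∑ i, c i) * D := by rw [← Finset.sum_mul]
    have hMnonneg : ∀ i, 0 ≤ M k i := by
      intro i
      by_cases h : i = i₀
      · simp only [hM, if_pos h]; positivity
      · simp only [hM, if_neg h]; exact hDpos.le
    have hMD : ∀ i, D ≤ M k i := by
      intro i
      by_cases h : i = i₀
      · simp only [hM, if_pos h]
        nlinarith [Nat.cast_nonneg (α := ℝ) k, hDpos]
      · simp only [hM, if_neg h]
        exact le_rfl
    have hsumMpos : 0 < ∑ i, c i * M k i := by
      obtain ⟨j, hj⟩ := hcpos
      exact Finset.sum_pos' (fun i _ => mul_nonneg (hc i) (hMnonneg i))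
        ⟨j, Finset.mem_univ j, mul_pos hj (lt_of_lt_of_le hDpos (hMD j))⟩
    have hW : (CC^2)⁻¹ ≤ ((∑ i, c i * M k i)^2)⁻¹ := by
      apply inv_anti₀ (by positivity)
      nlinarith
    have hreal : QQ ≤ (∏ i, L k i) * ((CC^2)⁻¹)
        * (K1 δ * Real.exp (-(2*k:ℝ)) * KA δ^(n-1)) := by
      rw [hprodL, Real.mul_rpow hδ0.le (Real.exp_pos _).le, ← Real.exp_mul]
      have hexp : Real.exp (-(k:ℝ) * (2 * μ i₀)) * Real.exp (-(2*k:ℝ)) = 1 := by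
        rw [← Real.exp_add, hμ, show -(k:ℝ) * (2 * (-1)) + -(2*(k:ℝ)) = 0 by ring,
          Real.exp_zero]
      rw [hQQ]
      have key : δ ^ (2 * μ i₀) * Real.exp (-(k:ℝ) * (2 * μ i₀)) * mAe * (CC^2)⁻¹
            * (K1 δ * Real.exp (-(2*k:ℝ)) * KA δ^(n-1))
          = (δ ^ (2 * μ i₀) * mAe * (CC^2)⁻¹ * (K1 δ * KA δ^(n-1)))
            * (Real.exp (-(k:ℝ) * (2 * μ i₀)) * Real.exp (-(2*k:ℝ))) := by ring
      rw [key, hexp, mul_one]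
    calc ENNReal.ofReal QQ
        ≤ ENNReal.ofReal ((∏ i, L k i) * ((CC^2)⁻¹)
            * (K1 δ * Real.exp (-(2*k:ℝ)) * KA δ^(n-1))) := ENNReal.ofReal_le_ofReal hreal
      _ = ENNReal.ofReal (∏ i, L k i) * ENNReal.ofReal ((CC^2)⁻¹)
            * ENNReal.ofReal (K1 δ * Real.exp (-(2*k:ℝ)) * KA δ^(n-1)) := by
          rw [ENNReal.ofReal_mul ?h1, ENNReal.ofReal_mul ?h2]
          case h1 => rw [hprodL]; positivity
          case h2 => rw [hprodL]
                     have := Real.rpow_pos_of_pos (show (0:ℝ) < δ * Real.exp (-(k:ℝ)) by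
                        positivity) (2 * μ i₀)
                     positivity
      _ ≤ m k * ∏ i, nu (I k i) := by
          rw [hm]
          exact mul_le_mul' (mul_le_mul' le_rfl (ENNReal.ofReal_le_ofReal hW)) hnu
  have : (⊤:ENNReal) ≤ Tint n δ μ c := by
    refine le_trans ?_ hbox
    rw [show (⊤:ENNReal) = ∑' _ : ℕ, ENNReal.ofReal QQ from
      (ENNReal.tsum_const_eq_top_of_ne_zero (by simp [ENNReal.ofReal_eq_zero]; linarith)).symm]
    exact ENNReal.tsum_le_tsum hterm
  exact top_le_iff.1 this

end LogCrit
namespace LogCrit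
variable {n : ℕ}

lemma tsum_twoD_top {Q : ℝ} (hQ : 0 < Q) :
    ∑' p : ℕ × ℕ, ENNReal.ofReal (Q / ((p.1:ℝ) + (p.2:ℝ) + 2)^2) = ⊤ := by
  rw [ENNReal.tsum_prod']
  have hrow : ∀ j : ℕ, ENNReal.ofReal ((Q/4) / ((j:ℝ)+2))
      ≤ ∑' l : ℕ, ENNReal.ofReal (Q / ((j:ℝ) + (l:ℝ) + 2)^2) := by
    intro j
    have step1 : ENNReal.ofReal ((Q/4) / ((j:ℝ)+2))
        = ∑ _l ∈ Finset.range (j+2), ENNReal.ofReal (Q / (2*(j:ℝ)+4)^2) := by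
      rw [Finset.sum_const, Finset.card_range, nsmul_eq_mul]
      rw [show ((j+2:ℕ) : ENNReal) = ENNReal.ofReal ((j:ℝ)+2) by
        rw [← ENNReal.ofReal_natCast (j+2)]; congr 1; push_cast; ring]
      rw [← ENNReal.ofReal_mul (by positivity)]
      congr 1
      have h2 : ((j:ℝ)+2) ≠ 0 := by positivity
      field_simp
      ring
    rw [step1]
    refine le_trans (Finset.sum_le_sum fun l hl => ?_) (ENNReal.sum_le_tsum _)
    apply ENNReal.ofReal_le_ofReal
    apply div_le_div_of_nonneg_left hQ.le (by positivity)
    have hl' : (l:ℝ) ≤ (j:ℝ) + 1 := by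
      have := Finset.mem_range.1 hl
      exact_mod_cast Nat.lt_succ_iff.1 (by omega)
    nlinarith [Nat.cast_nonneg (α := ℝ) j, Nat.cast_nonneg (α := ℝ) l]
  rw [eq_top_iff]
  calc (⊤:ENNReal) = ∑' j : ℕ, ENNReal.ofReal ((Q/4) / ((j:ℝ)+2)) :=
        (tsum_harmonic_top (by linarith)).symm
    _ ≤ _ := ENNReal.tsum_le_tsum hrow

/-- Third divergence case: two indices with exponent -1 -/
lemma Tint_top_C {δ : ℝ} {μ c : Fin n → ℝ} (hδ0 : 0 < δ) (hδ1 : δ < 1)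
    (hc : ∀ i, 0 ≤ c i) (hcpos : ∃ j, 0 < c j) {i₀ i₁ : Fin n} (hne : i₀ ≠ i₁)
    (hμ0 : μ i₀ = -1) (hμ1 : μ i₁ = -1) :
    Tint n δ μ c = ⊤ := by
  classical
  set D := Dc δ with hD
  have hDpos : 0 < D := Dc_pos hδ0 hδ1
  set CC := (∑ i, c i) * D with hCC
  have hCCpos : 0 < CC := mul_pos (sum_c_pos hc hcpos) hDpos
  set mA : Fin n → ℝ := fun i => min ((δ/2) ^ (2 * μ i)) (δ ^ (2 * μ i)) with hmA
  set I : ℕ × ℕ → Fin n → Set ℝ := fun p i =>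
    if i = i₀ then Jb δ p.1 else if i = i₁ then Jb δ p.2 else An δ with hI
  set L : ℕ × ℕ → Fin n → ℝ := fun p i =>
    if i = i₀ then (δ * Real.exp (-(p.1:ℝ))) ^ (2 * μ i)
    else if i = i₁ then (δ * Real.exp (-(p.2:ℝ))) ^ (2 * μ i) else mA i with hL
  set M : ℕ × ℕ → Fin n → ℝ := fun p i =>
    if i = i₀ then ((p.1:ℝ)+1) * D else if i = i₁ then ((p.2:ℝ)+1) * D else D with hM
  set m : ℕ × ℕ → ENNReal :=
    fun p => ENNReal.ofReal (∏ i, L p i) * ENNReal.ofReal (((∑ i, c i * M p i)^2)⁻¹) with hm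
  have hi₁mem : i₁ ∈ Finset.univ.erase i₀ := Finset.mem_erase.2 ⟨hne.symm, Finset.mem_univ _⟩
  have hbox : ∑' p : ℕ × ℕ, m p * ∏ i, nu (I p i) ≤ Tint n δ μ c := by
    apply Tint_ge_boxes
    · intro p i
      by_cases h0 : i = i₀
      · simp only [hI, if_pos h0]; exact measurableSet_Ioo
      · by_cases h1 : i = i₁
        · simp only [hI, if_neg h0, if_pos h1]; exact measurableSet_Ioo
        · simp only [hI, if_neg h0, if_neg h1]; exact measurableSet_Ioo
    · intro p i
      by_cases h0 : i = i₀
      · simp only [hI, if_pos h0]; exact Jb_subset hδ0 _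
      · by_cases h1 : i = i₁
        · simp only [hI, if_neg h0, if_pos h1]; exact Jb_subset hδ0 _
        · simp only [hI, if_neg h0, if_neg h1]; exact An_subset hδ0
    · intro p q hpq
      rcases Prod.mk.injEq p.1 p.2 q.1 q.2 ▸ (fun h => hpq (Prod.ext_iff.2 h)) with _
      by_cases h1 : p.1 = q.1
      · have h2 : p.2 ≠ q.2 := fun h => hpq (Prod.ext_iff.2 ⟨h1, h⟩)
        apply disjoint_pi_of_coord i₁
        simp only [hI, if_neg (Ne.symm hne), if_pos rfl]
        exact Jb_disjoint hδ0 h2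
      · apply disjoint_pi_of_coord i₀
        simp only [hI, if_pos rfl]
        exact Jb_disjoint hδ0 h1
    · intro p r hr
      apply igrand_lower hδ1 hc hcpos (I p)
      · intro i
        by_cases h0 : i = i₀
        · simp only [hI, if_pos h0]; exact Jb_subset hδ0 _
        · by_cases h1 : i = i₁
          · simp only [hI, if_neg h0, if_pos h1]; exact Jb_subset hδ0 _
          · simp only [hI, if_neg h0, if_neg h1]; exact An_subset hδ0
      · intro i
        by_cases h0 : i = i₀
        · simp only [hL, if_pos h0]
          exact (Real.rpow_pos_of_pos (by positivity) _).le
        · by_cases h1 : i = i₁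
          · simp only [hL, if_neg h0, if_pos h1]
            exact (Real.rpow_pos_of_pos (by positivity) _).le
          · simp only [hL, if_neg h0, if_neg h1, hmA]
            exact (mA_pos hδ0 _).le
      · intro i t ht
        by_cases h0 : i = i₀
        · simp only [hL, if_pos h0]
          simp only [hI, if_pos h0] at ht
          exact Jb_rpow_le hδ0 (by rw [h0, hμ0]; norm_num) ht
        · by_cases h1 : i = i₁
          · simp only [hL, if_neg h0, if_pos h1]
            simp only [hI, if_neg h0, if_pos h1] at ht
            exact Jb_rpow_le hδ0 (by rw [h1, hμ1]; norm_num) ht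
          · simp only [hL, if_neg h0, if_neg h1, hmA]
            simp only [hI, if_neg h0, if_neg h1] at ht
            exact mA_le _ hδ0 ht
      · intro i t ht
        by_cases h0 : i = i₀
        · simp only [hM, if_pos h0]
          simp only [hI, if_pos h0] at ht
          rw [hD]
          exact abs_log_Jb_le hδ0 hδ1 ht
        · by_cases h1 : i = i₁
          · simp only [hM, if_neg h0, if_pos h1]
            simp only [hI, if_neg h0, if_pos h1] at ht
            rw [hD]
            exact abs_log_Jb_le hδ0 hδ1 ht
          · simp only [hM, if_neg h0, if_neg h1]
            simp only [hI, if_neg h0, if_neg h1] at ht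
            rw [hD]
            exact abs_log_An_le hδ0 hδ1 ht
      · exact hr
  set mAe : ℝ := ∏ i ∈ (Finset.univ.erase i₀).erase i₁, mA i with hmAe
  have hmAepos : 0 < mAe := Finset.prod_pos fun i _ => mA_pos hδ0 _
  set QQ : ℝ := δ ^ (2 * μ i₀) * δ ^ (2 * μ i₁) * mAe * (CC^2)⁻¹
    * (K1 δ * K1 δ * KA δ^(n-2)) with hQQ
  have hQQpos : 0 < QQ := by
    have h1 := Real.rpow_pos_of_pos hδ0 (2 * μ i₀)
    have h2 := Real.rpow_pos_of_pos hδ0 (2 * μ i₁)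
    have := K1_pos hδ0
    have := KA_pos hδ0
    positivity
  have hterm : ∀ p : ℕ × ℕ, ENNReal.ofReal (QQ / ((p.1:ℝ) + (p.2:ℝ) + 2)^2)
      ≤ m p * ∏ i, nu (I p i) := by
    intro p
    have hnu : ENNReal.ofReal ((K1 δ * Real.exp (-(2*p.1:ℝ))) * ((K1 δ * Real.exp (-(2*p.2:ℝ)))
        * KA δ^(n-2))) ≤ ∏ i, nu (I p i) := by
      have e1 : ∏ i, nu (I p i) = nu (Jb δ p.1) * (nu (Jb δ p.2)
          * ∏ i ∈ (Finset.univ.erase i₀).erase i₁, nu (An δ)) := by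
        rw [← Finset.mul_prod_erase Finset.univ _ (Finset.mem_univ i₀),
          ← Finset.mul_prod_erase _ _ hi₁mem]
        congr 1
        · simp [hI]
        congr 1
        · simp [hI, Ne.symm hne]
        · refine Finset.prod_congr rfl fun i hi => ?_
          have h1 : i ≠ i₁ := Finset.ne_of_mem_erase hi
          have h0 : i ≠ i₀ := Finset.ne_of_mem_erase (Finset.mem_of_mem_erase hi)
          simp [hI, h0, h1]
      rw [e1, Finset.prod_const, Finset.card_erase_of_mem hi₁mem,
        Finset.card_erase_of_mem (Finset.mem_univ i₀), Finset.card_univ, Fintype.card_fin]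
      have h2 : ENNReal.ofReal ((K1 δ * Real.exp (-(2*p.1:ℝ))) * ((K1 δ * Real.exp (-(2*p.2:ℝ)))
          * KA δ^(n-2)))
          = ENNReal.ofReal (K1 δ * Real.exp (-(2*p.1:ℝ)))
            * (ENNReal.ofReal (K1 δ * Real.exp (-(2*p.2:ℝ))) * ENNReal.ofReal (KA δ)^(n-2)) := by
        rw [← ENNReal.ofReal_pow (KA_pos hδ0).le,
          ← ENNReal.ofReal_mul (mul_pos (K1_pos hδ0) (Real.exp_pos _)).le,
          ← ENNReal.ofReal_mul (mul_pos (K1_pos hδ0) (Real.exp_pos _)).le]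
      rw [h2]
      exact mul_le_mul' (nu_Jb_ge hδ0 _) (mul_le_mul' (nu_Jb_ge hδ0 _)
        (pow_le_pow_left' (nu_An_ge hδ0) _))
    have hprodL : ∏ i, L p i = (δ * Real.exp (-(p.1:ℝ))) ^ (2 * μ i₀)
        * ((δ * Real.exp (-(p.2:ℝ))) ^ (2 * μ i₁) * mAe) := by
      rw [← Finset.mul_prod_erase Finset.univ _ (Finset.mem_univ i₀),
        ← Finset.mul_prod_erase _ _ hi₁mem]
      congr 1
      · simp [hL]
      congr 1
      · simp [hL, Ne.symm hne]
      · refine Finset.prod_congr rfl fun i hi => ?_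
        have h1 : i ≠ i₁ := Finset.ne_of_mem_erase hi
        have h0 : i ≠ i₀ := Finset.ne_of_mem_erase (Finset.mem_of_mem_erase hi)
        simp [hL, h0, h1]
    have hsumM : ∑ i, c i * M p i ≤ ((p.1:ℝ) + (p.2:ℝ) + 2) * CC := by
      rw [hCC]
      calc ∑ i, c i * M p i ≤ ∑ i, c i * (((p.1:ℝ) + (p.2:ℝ) + 2) * D) := by
            apply Finset.sum_le_sum
            intro i _
            apply mul_le_mul_of_nonneg_left _ (hc i)
            have c1 : (0:ℝ) ≤ (p.1:ℝ) := Nat.cast_nonneg _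
            have c2 : (0:ℝ) ≤ (p.2:ℝ) := Nat.cast_nonneg _
            by_cases h0 : i = i₀
            · simp only [hM, if_pos h0]; nlinarith
            · by_cases h1 : i = i₁
              · simp only [hM, if_neg h0, if_pos h1]; nlinarith
              · simp only [hM, if_neg h0, if_neg h1]; nlinarith
        _ = ((p.1:ℝ) + (p.2:ℝ) + 2) * ((∑ i, c i) * D) := by rw [← Finset.sum_mul]; ring
    have hMnonneg : ∀ i, 0 ≤ M p i := by
      intro i
      have c1 : (0:ℝ) ≤ (p.1:ℝ) := Nat.cast_nonneg _
      have c2 : (0:ℝ) ≤ (p.2:ℝ) := Nat.cast_nonneg _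
      by_cases h0 : i = i₀
      · simp only [hM, if_pos h0]; nlinarith
      · by_cases h1 : i = i₁
        · simp only [hM, if_neg h0, if_pos h1]; nlinarith
        · simp only [hM, if_neg h0, if_neg h1]; exact hDpos.le
    have hMD : ∀ i, D ≤ M p i := by
      intro i
      have c1 : (0:ℝ) ≤ (p.1:ℝ) := Nat.cast_nonneg _
      have c2 : (0:ℝ) ≤ (p.2:ℝ) := Nat.cast_nonneg _
      by_cases h0 : i = i₀
      · simp only [hM, if_pos h0]; nlinarith
      · by_cases h1 : i = i₁
        · simp only [hM, if_neg h0, if_pos h1]; nlinarith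
        · simp only [hM, if_neg h0, if_neg h1]; exact le_rfl
    have hsumMpos : 0 < ∑ i, c i * M p i := by
      obtain ⟨j, hj⟩ := hcpos
      exact Finset.sum_pos' (fun i _ => mul_nonneg (hc i) (hMnonneg i))
        ⟨j, Finset.mem_univ j, mul_pos hj (lt_of_lt_of_le hDpos (hMD j))⟩
    have hW : ((((p.1:ℝ) + (p.2:ℝ) + 2) * CC)^2)⁻¹ ≤ ((∑ i, c i * M p i)^2)⁻¹ := by
      apply inv_anti₀ (by positivity)
      nlinarith
    have hreal : QQ / ((p.1:ℝ) + (p.2:ℝ) + 2)^2 ≤ (∏ i, L p i)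
        * (((((p.1:ℝ) + (p.2:ℝ) + 2) * CC)^2)⁻¹)
        * ((K1 δ * Real.exp (-(2*p.1:ℝ))) * ((K1 δ * Real.exp (-(2*p.2:ℝ))) * KA δ^(n-2))) := by
      rw [hprodL, Real.mul_rpow hδ0.le (Real.exp_pos _).le,
        Real.mul_rpow hδ0.le (Real.exp_pos _).le, ← Real.exp_mul, ← Real.exp_mul]
      have hexp1 : Real.exp (-(p.1:ℝ) * (2 * μ i₀)) * Real.exp (-(2*p.1:ℝ)) = 1 := by
        rw [← Real.exp_add, hμ0, show -(p.1:ℝ) * (2 * (-1)) + -(2*(p.1:ℝ)) = 0 by ring,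
          Real.exp_zero]
      have hexp2 : Real.exp (-(p.2:ℝ) * (2 * μ i₁)) * Real.exp (-(2*p.2:ℝ)) = 1 := by
        rw [← Real.exp_add, hμ1, show -(p.2:ℝ) * (2 * (-1)) + -(2*(p.2:ℝ)) = 0 by ring,
          Real.exp_zero]
      rw [hQQ]
      have hS : (0:ℝ) < (p.1:ℝ) + (p.2:ℝ) + 2 := by positivity
      have key : δ ^ (2 * μ i₀) * Real.exp (-(p.1:ℝ) * (2 * μ i₀))
            * (δ ^ (2 * μ i₁) * Real.exp (-(p.2:ℝ) * (2 * μ i₁)) * mAe)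
            * ((((p.1:ℝ) + (p.2:ℝ) + 2) * CC)^2)⁻¹
            * ((K1 δ * Real.exp (-(2*p.1:ℝ))) * ((K1 δ * Real.exp (-(2*p.2:ℝ))) * KA δ^(n-2)))
          = (δ ^ (2 * μ i₀) * δ ^ (2 * μ i₁) * mAe * (CC^2)⁻¹ * (K1 δ * K1 δ * KA δ^(n-2)))
            / ((p.1:ℝ) + (p.2:ℝ) + 2)^2
            * ((Real.exp (-(p.1:ℝ) * (2 * μ i₀)) * Real.exp (-(2*p.1:ℝ)))
              * (Real.exp (-(p.2:ℝ) * (2 * μ i₁)) * Real.exp (-(2*p.2:ℝ)))) := by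
        field_simp
      rw [key, hexp1, hexp2]
      norm_num
    calc ENNReal.ofReal (QQ / ((p.1:ℝ) + (p.2:ℝ) + 2)^2)
        ≤ ENNReal.ofReal ((∏ i, L p i) * (((((p.1:ℝ) + (p.2:ℝ) + 2) * CC)^2)⁻¹)
            * ((K1 δ * Real.exp (-(2*p.1:ℝ))) * ((K1 δ * Real.exp (-(2*p.2:ℝ)))
              * KA δ^(n-2)))) := ENNReal.ofReal_le_ofReal hreal
      _ = ENNReal.ofReal (∏ i, L p i)
            * ENNReal.ofReal (((((p.1:ℝ) + (p.2:ℝ) + 2) * CC)^2)⁻¹)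
            * ENNReal.ofReal ((K1 δ * Real.exp (-(2*p.1:ℝ))) * ((K1 δ * Real.exp (-(2*p.2:ℝ)))
              * KA δ^(n-2))) := by
          rw [ENNReal.ofReal_mul ?h1, ENNReal.ofReal_mul ?h2]
          case h1 =>
            rw [hprodL]
            have u1 := Real.rpow_pos_of_pos (show (0:ℝ) < δ * Real.exp (-(p.1:ℝ)) by positivity)
              (2 * μ i₀)
            have u2 := Real.rpow_pos_of_pos (show (0:ℝ) < δ * Real.exp (-(p.2:ℝ)) by positivity)
              (2 * μ i₁)
            positivity
          case h2 =>
            rw [hprodL]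
            have u1 := Real.rpow_pos_of_pos (show (0:ℝ) < δ * Real.exp (-(p.1:ℝ)) by positivity)
              (2 * μ i₀)
            have u2 := Real.rpow_pos_of_pos (show (0:ℝ) < δ * Real.exp (-(p.2:ℝ)) by positivity)
              (2 * μ i₁)
            positivity
      _ ≤ m p * ∏ i, nu (I p i) := by
          rw [hm]
          exact mul_le_mul' (mul_le_mul' le_rfl (ENNReal.ofReal_le_ofReal hW)) hnu
  have : (⊤:ENNReal) ≤ Tint n δ μ c := by
    refine le_trans ?_ hbox
    rw [← tsum_twoD_top hQQpos]
    exact ENNReal.tsum_le_tsum hterm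
  exact top_le_iff.1 this

end LogCrit
namespace LogCrit
variable {n : ℕ}

lemma F_measurable (μ c : Fin n → ℝ) :
    Measurable (fun r : Fin n → ℝ =>
      (∏ i, r i ^ (2 * μ i)) * ((Real.log (∏ i, r i ^ c i))^2)⁻¹) := by
  apply Measurable.mul
  · apply Finset.measurable_prod
    intro i _
    have hr : Measurable (fun x : ℝ => x ^ (2 * μ i)) := by fun_prop
    exact hr.comp (measurable_pi_apply i)
  · apply Measurable.inv
    apply Measurable.pow_const
    apply Real.measurable_log.comp
    apply Finset.measurable_prod
    intro i _
    have hr : Measurable (fun x : ℝ => x ^ (c i)) := by fun_prop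
    exact hr.comp (measurable_pi_apply i)

lemma key_iff {δ : ℝ} (hδ0 : 0 < δ) (hδ1 : δ < 1) (μ c : Fin n → ℝ) :
    IntegrableOn
      (fun w : Fin n → ℂ =>
        (∏ i, ‖w i‖ ^ (2 * μ i)) *
          ((Real.log (∏ i, ‖w i‖ ^ (c i))) ^ 2)⁻¹)
      {w : Fin n → ℂ | ∀ i, ‖w i‖ < δ} volume
    ↔ Tint n δ μ c ≠ ⊤ := by
  set F : (Fin n → ℝ) → ℝ := fun r =>
    (∏ i, r i ^ (2 * μ i)) * ((Real.log (∏ i, r i ^ c i))^2)⁻¹ with hF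
  set f : (Fin n → ℂ) → ℝ := fun w => F (fun i => ‖w i‖) with hf
  have hW : Measurable (fun (w : Fin n → ℂ) i => ‖w i‖) :=
    (measurePreserving_absPi n).measurable
  have hfm : Measurable f := (F_measurable μ c).comp hW
  have hnn : ∀ w, 0 ≤ f w := by
    intro w
    apply mul_nonneg
    · exact Finset.prod_nonneg fun i _ => Real.rpow_nonneg (norm_nonneg _) _
    · positivity
  -- identify the lintegral
  have hlin : ∫⁻ w in {w : Fin n → ℂ | ∀ i, ‖w i‖ < δ},
      ENNReal.ofReal (f w) = Tint n δ μ c := by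
    have hFof : Measurable (fun r : Fin n → ℝ => ENNReal.ofReal (F r)) :=
      (F_measurable μ c).ennreal_ofReal
    calc ∫⁻ w in {w : Fin n → ℂ | ∀ i, ‖w i‖ < δ}, ENNReal.ofReal (f w)
        = ∫⁻ r in {r : Fin n → ℝ | ∀ i, r i < δ}, ENNReal.ofReal (F r) ∂(Pim n) :=
          reduction _ hFof
      _ = ∫⁻ r in Set.pi Set.univ (fun _ : Fin n => Ioo 0 δ), ENNReal.ofReal (F r) ∂(Pim n) :=
          setLIntegral_congr slab_ae_box
      _ = Tint n δ μ c := by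
          rw [Tint]
          apply setLIntegral_congr_fun_ae (MeasurableSet.univ_pi fun _ => measurableSet_Ioo)
          apply ae_of_all
          intro r hr
          have hri : ∀ i, r i ∈ Ioo (0:ℝ) δ := fun i => hr i (Set.mem_univ i)
          have hlog : Real.log (∏ i, r i ^ c i) = ∑ i, c i * Real.log (r i) := by
            rw [Real.log_prod (fun i _ => (Real.rpow_pos_of_pos (hri i).1 _).ne')]
            exact Finset.sum_congr rfl fun i _ => Real.log_rpow (hri i).1 _
          show ENNReal.ofReal ((∏ i, r i ^ (2 * μ i))
            * ((Real.log (∏ i, r i ^ c i))^2)⁻¹) = igrand μ c r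
          rw [hlog, igrand, ENNReal.ofReal_mul (Finset.prod_nonneg fun i _ =>
            Real.rpow_nonneg (hri i).1.le _), ENNReal.ofReal_prod_of_nonneg
            (fun i _ => Real.rpow_nonneg (hri i).1.le _)]
  constructor
  · intro hint
    rw [← hlin]
    have h2 := hint.2
    rw [hasFiniteIntegral_iff_ofReal (ae_of_all _ hnn)] at h2
    exact h2.ne
  · intro hT
    constructor
    · exact (hfm.comp measurable_id).aestronglyMeasurable
    · rw [hasFiniteIntegral_iff_ofReal (ae_of_all _ hnn)]
      rw [hlin]
      exact lt_of_le_of_ne le_top hT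

end LogCrit
end

/-- The complex form of the integrability criterion used in the proof of
Proposition 5.3 of the paper: for `δ ∈ (0,1)`, `μᵢ ∈ ℝ` and `cᵢ ≥ 0` with some
`c_j > 0`, the integral over the polydisk `P_δ ⊂ ℂⁿ` of
`(∏ |wᵢ|^{2μᵢ}) (log ∏ |wᵢ|^{cᵢ})^{-2}` is finite iff (a) every `μᵢ ≥ -1`,
(b) `μᵢ = -1` forces `cᵢ > 0`, and (c) at most one index has `μᵢ = -1`. -/
theorem log_weighted_monomial_integrability_criterion_complex
    (n : ℕ) (hn : 1 ≤ n) (δ : ℝ) (hδ0 : 0 < δ) (hδ1 : δ < 1)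
    (μ c : Fin n → ℝ) (hc : ∀ i, 0 ≤ c i) (hcpos : ∃ j, 0 < c j) :
    IntegrableOn
      (fun w : Fin n → ℂ =>
        (∏ i, ‖w i‖ ^ (2 * μ i)) *
          ((Real.log (∏ i, ‖w i‖ ^ (c i))) ^ 2)⁻¹)
      {w : Fin n → ℂ | ∀ i, ‖w i‖ < δ} volume
    ↔ ((∀ i, -1 ≤ μ i) ∧ (∀ i, μ i = -1 → 0 < c i) ∧
        ∀ i j, μ i = -1 → μ j = -1 → i = j) := by
  rw [LogCrit.key_iff hδ0 hδ1 μ c]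
  constructor
  · intro hT
    refine ⟨?_, ?_, ?_⟩
    · intro i
      by_contra hlt
      push_neg at hlt
      exact hT (LogCrit.Tint_top_A hδ0 hδ1 hc hcpos hlt)
    · intro i hi
      by_contra hci
      push_neg at hci
      have hzero : c i = 0 := le_antisymm hci (hc i)
      exact hT (LogCrit.Tint_top_B hδ0 hδ1 hc hcpos hi hzero)
    · intro i j hi hj
      by_contra hij
      exact hT (LogCrit.Tint_top_C hδ0 hδ1 hc hcpos hij hi hj)
  · rintro ⟨h1, h2, h3⟩
    exact (LogCrit.Tint_lt_top hδ0 hδ1 hc hcpos h1 h2 h3).ne
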